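/- If f is a polynomial function of degree at most n, then the function x ↦ ∑_{i=0}^{n} (-1)^i f^{(i)}(x) · x^{i+1}/(i+1)! is an antiderivative of f, i.e., its derivative at every x equals f(x). -/

import Mathlib

open Polynomial

lemma iteratedDeriv_polyEval (p : Polynomial ℝ) (i : ℕ) :
    iteratedDeriv i (fun x => p.eval x) = fun x => (Polynomial.derivative^[i] p).eval x := by
  induction i with
  | zero => simp
  | succ k ih =>
    rw [iteratedDeriv_succ, ih, Function.iterate_succ_apply']
    funext x
    exact Polynomial.deriv (p := Polynomial.derivative^[k] p)

theorem stmt_3 (n : ℕ) (p : Polynomial ℝ) (hp : p.natDegree ≤ n)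
    (f : ℝ → ℝ) (hf : f = fun x => p.eval x) :
    ∀ x : ℝ,
      deriv (fun y => ∑ i ∈ Finset.range (n + 1),
        (-1 : ℝ) ^ i * iteratedDeriv i f y * y ^ (i + 1) / (Nat.factorial (i + 1) : ℝ)) x
        = f x := by
  subst hf
  intro x
  set q : ℕ → Polynomial ℝ := fun i => Polynomial.derivative^[i] p with hq
  set F : ℕ → ℝ := fun i => (-1 : ℝ) ^ i * (q i).eval x * x ^ i / (Nat.factorial i : ℝ)
    with hF
  have hderiv : HasDerivAt (fun y => ∑ i ∈ Finset.range (n + 1),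
      (-1 : ℝ) ^ i * iteratedDeriv i (fun x => p.eval x) y * y ^ (i + 1) /
        (Nat.factorial (i + 1) : ℝ))
      (∑ i ∈ Finset.range (n + 1), (F i - F (i + 1))) x := by
    apply HasDerivAt.fun_sum
    intro i _
    have h1 : HasDerivAt (fun y : ℝ => (-1 : ℝ) ^ i * (q i).eval y)
        ((-1 : ℝ) ^ i * (q (i + 1)).eval x) x := by
      have := ((q i).hasDerivAt x).const_mul ((-1 : ℝ) ^ i)
      simpa [hq, Function.iterate_succ_apply'] using this
    have h2 : HasDerivAt (fun y : ℝ => y ^ (i + 1)) ((i + 1 : ℕ) * x ^ i) x := by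
      simpa using hasDerivAt_pow (i + 1) x
    have h3 := (h1.mul h2).div_const (Nat.factorial (i + 1) : ℝ)
    have hkey : ((-1 : ℝ) ^ i * (q (i + 1)).eval x * x ^ (i + 1) +
        (-1 : ℝ) ^ i * (q i).eval x * ((i + 1 : ℕ) * x ^ i)) /
        (Nat.factorial (i + 1) : ℝ) = F i - F (i + 1) := by
      have hfac : (Nat.factorial (i + 1) : ℝ) = (i + 1 : ℝ) * (Nat.factorial i : ℝ) := by
        rw [Nat.factorial_succ]; push_cast; ring
      have h0 : (Nat.factorial i : ℝ) ≠ 0 := Nat.cast_ne_zero.2 (Nat.factorial_ne_zero i)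
      have h1' : (i + 1 : ℝ) ≠ 0 := by positivity
      simp only [hF, pow_succ, hfac]
      push_cast
      field_simp
      ring
    rw [← hkey]
    convert h3 using 2
    · rfl
    · rw [iteratedDeriv_polyEval]; rfl
  rw [hderiv.deriv, Finset.sum_range_sub']
  have hzero : q (n + 1) = 0 :=
    Polynomial.iterate_derivative_eq_zero (lt_of_le_of_lt hp (Nat.lt_succ_self n))
  have hFz : F (n + 1) = 0 := by simp only [hF]; rw [hzero]; simp
  have hF0 : F 0 = p.eval x := by simp [hF, hq]
  rw [hFz, hF0, sub_zero]
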